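/- For every n ∈ ℕ and all X ≥ 0, the alternating Laguerre sum is nonnegative: S_n(X) = Σ_{k=0}^n (−1)^k L_k(X) ≥ 0. -/

import Mathlib

open MeasureTheory

noncomputable section

/-- The `n`-th Laguerre polynomial `L_n(x) = Σ_{k=0}^n (n choose k) (−x)^k / k!`. -/
def laguerreFun (n : ℕ) (x : ℝ) : ℝ :=
  ∑ k ∈ Finset.range (n + 1), (n.choose k : ℝ) * (-x) ^ k / (k.factorial : ℝ)

/-- `S_n(X) = Σ_{k=0}^{n} (−1)^k L_k(X)`. -/
def Sfun (n : ℕ) (X : ℝ) : ℝ :=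
  ∑ k ∈ Finset.range (n + 1), (-1 : ℝ) ^ k * laguerreFun k X

namespace AltLag

/-- Hermite polynomial values (physicists'). -/
def H (t : ℝ) : ℕ → ℝ
  | 0 => 1
  | 1 => 2*t
  | (k+2) => 2*t*H t (k+1) - 2*(k+1)*H t k

/-- `w k = H k ^2 / (2^k k!)`. -/
def w (t : ℝ) (k : ℕ) : ℝ := (H t k)^2 / (2^k * (Nat.factorial k : ℝ))

/-- `nu (k+1) = H (k+1) * H k / (2^k k!)`, `nu 0 = 0`. -/
def nu (t : ℝ) : ℕ → ℝ
  | 0 => 0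
  | (k+1) => H t (k+1) * H t k / (2^k * (Nat.factorial k : ℝ))

/-- `c (2j) = C(2j,j)/4^j`, zero for odd. -/
def c : ℕ → ℝ := fun m => if Even m then (Nat.choose m (m/2) : ℝ)/2^m else 0

def P (t : ℝ) (n : ℕ) : ℝ := ∑ m ∈ Finset.range (n+1), c m * w t (n - m)
def Q (t : ℝ) (n : ℕ) : ℝ := ∑ m ∈ Finset.range (n+1), c m * nu t (n - m)

/-- generalized Laguerre `L_k^{(1)}`. -/
def L1 (k : ℕ) (x : ℝ) : ℝ :=
  ∑ j ∈ Finset.range (k+1), ((k+1).choose (k - j) : ℝ) * (-x)^j / (Nat.factorial j : ℝ)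

def S1 (n : ℕ) (x : ℝ) : ℝ := ∑ k ∈ Finset.range (n+1), (-1:ℝ)^k * L1 k x

def q' (t : ℝ) : ℕ → ℝ
  | 0 => 0
  | (n+1) => 2*t*S1 n (2*t^2)

lemma c_nonneg (m : ℕ) : 0 ≤ c m := by
  unfold c; split <;> positivity

lemma w_nonneg (t : ℝ) (k : ℕ) : 0 ≤ w t k := by
  unfold w; positivity

lemma P_nonneg (t : ℝ) (n : ℕ) : 0 ≤ P t n :=
  Finset.sum_nonneg fun m _ => mul_nonneg (c_nonneg m) (w_nonneg t _)

lemma c_one : c 1 = 0 := by simp [c]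

/-- (L1): `nu (k+1) = 2 t w k - nu k`. -/
lemma nu_rec (t : ℝ) (k : ℕ) : nu t (k+1) = 2*t*w t k - nu t k := by
  cases k with
  | zero => simp [nu, w, H]
  | succ k =>
    show H t (k+2) * H t (k+1) / (2^(k+1) * ((k+1).factorial : ℝ))
        = 2*t*w t (k+1) - nu t (k+1)
    rw [show H t (k+2) = 2*t*H t (k+1) - 2*(k+1)*H t k from rfl]
    unfold w nu
    rw [Nat.factorial_succ]
    have h1 : ((2:ℝ))^(k+1) ≠ 0 := by positivity
    have h2 : ((Nat.factorial k : ℝ)) ≠ 0 := Nat.cast_ne_zero.mpr (Nat.factorial_ne_zero k)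
    have h3 : ((k:ℝ)+1) ≠ 0 := by positivity
    push_cast
    field_simp
    ring

/-- (L2): `(k+1) w (k+1) = 2 t² w k - 2 t nu k + k w (k-1)`. -/
lemma w_rec (t : ℝ) (k : ℕ) :
    ((k:ℝ)+1) * w t (k+1) = 2*t^2*w t k - 2*t*nu t k + (k:ℝ)*w t (k-1) := by
  cases k with
  | zero => simp [w, H, nu]; ring
  | succ k =>
    have hH : H t (k+2) = 2*t*H t (k+1) - 2*((k:ℝ)+1)*H t k := by
      rw [show H t (k+2) = 2*t*H t (k+1) - 2*(k+1)*H t k from rfl]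
    have h1 : ((2:ℝ))^k ≠ 0 := by positivity
    have h2 : ((Nat.factorial k : ℝ)) ≠ 0 := Nat.cast_ne_zero.mpr (Nat.factorial_ne_zero k)
    have h3 : ((k:ℝ)+1) ≠ 0 := by positivity
    have h4 : ((k:ℝ)+1+1) ≠ 0 := by positivity
    simp only [Nat.add_sub_cancel]
    simp only [w, nu]
    rw [hH, Nat.factorial_succ (k+1), Nat.factorial_succ k]
    push_cast
    field_simp
    ring

/-- (L3): `(m+2) c (m+2) = (m+1) c m`. -/
lemma c_rec (m : ℕ) : ((m:ℝ)+2) * c (m+2) = ((m:ℝ)+1) * c m := by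
  by_cases hm : Even m
  · obtain ⟨j, rfl⟩ := hm
    have he1 : Even (j + j) := ⟨j, rfl⟩
    have he2 : Even (j + j + 2) := ⟨j+1, by ring⟩
    have hd1 : (j + j) / 2 = j := by omega
    have hd2 : (j + j + 2) / 2 = j + 1 := by omega
    simp only [c, if_pos he1, if_pos he2, hd1, hd2]
    have key : (j + 1) * Nat.centralBinom (j+1) = 2 * (2*j+1) * Nat.centralBinom j :=
      Nat.succ_mul_centralBinom_succ j
    have e1 : (j + j + 2).choose (j + 1) = Nat.centralBinom (j+1) := by
      unfold Nat.centralBinom; congr 1; ring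
    have e2 : (j + j).choose j = Nat.centralBinom j := by
      unfold Nat.centralBinom; congr 1; ring
    rw [e1, e2]
    have h1 : ((2:ℝ))^(j+j) ≠ 0 := by positivity
    have h2 : ((2:ℝ))^(j+j+2) ≠ 0 := by positivity
    have keyR : ((j:ℝ) + 1) * (Nat.centralBinom (j+1) : ℝ)
        = 2 * (2*(j:ℝ)+1) * (Nat.centralBinom j : ℝ) := by
      exact_mod_cast congrArg (fun z : ℕ => (z : ℝ)) key
    field_simp
    have hp : (2:ℝ)^(j+j+2) = 2^j * 2^j * 4 := by
      rw [pow_add, pow_add]; norm_num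
    rw [hp]
    push_cast
    linear_combination (2 * (2:ℝ)^j * (2:ℝ)^j) * keyR
  · have hm2 : ¬ Even (m+2) := by
      intro h; apply hm; rcases h with ⟨r, hr⟩; exact ⟨r-1, by omega⟩
    simp [c, if_neg hm, if_neg hm2]

/-- (L4): `Q (n+1) = 2 t P n - Q n`. -/
lemma Q_rec (t : ℝ) (n : ℕ) : Q t (n+1) = 2*t*P t n - Q t n := by
  unfold Q P
  rw [Finset.sum_range_succ]
  have hnu0 : nu t (n+1-(n+1)) = 0 := by simp [nu]
  rw [hnu0, mul_zero, add_zero]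
  have step : ∀ m ∈ Finset.range (n+1),
      c m * nu t (n+1-m) = 2*t*(c m * w t (n-m)) - c m * nu t (n-m) := by
    intro m hm
    have hmn : m ≤ n := Nat.lt_succ_iff.mp (Finset.mem_range.mp hm)
    have : n + 1 - m = (n - m) + 1 := by omega
    rw [this, nu_rec]
    ring
  rw [Finset.sum_congr rfl step, Finset.sum_sub_distrib, ← Finset.mul_sum]

/-- (L5): `(n+2) P (n+2) = (n+2) P n + 2 t² P (n+1) - 2 t Q (n+1)`. -/
lemma P_rec (t : ℝ) (n : ℕ) :
    ((n:ℝ)+2) * P t (n+2) = ((n:ℝ)+2) * P t n + 2*t^2 * P t (n+1) - 2*t * Q t (n+1) := by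
  have hsplit : ((n:ℝ)+2) * P t (n+2)
      = (∑ m ∈ Finset.range (n+3), (m:ℝ) * (c m * w t (n+2-m)))
        + (∑ m ∈ Finset.range (n+3), ((n+2-m : ℕ):ℝ) * (c m * w t (n+2-m))) := by
    rw [P, Finset.mul_sum, ← Finset.sum_add_distrib]
    refine Finset.sum_congr rfl fun m hm => ?_
    have hmn : m ≤ n + 2 := Nat.lt_succ_iff.mp (Finset.mem_range.mp hm)
    have : ((n+2-m : ℕ):ℝ) = ((n:ℝ)+2) - (m:ℝ) := by
      rw [Nat.cast_sub hmn]; push_cast; ring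
    rw [this]; ring
  -- First sum (SA)
  have hSA : (∑ m ∈ Finset.range (n+3), (m:ℝ) * (c m * w t (n+2-m)))
      = (∑ m ∈ Finset.range (n+1), (m:ℝ) * (c m * w t (n-m))) + P t n := by
    have e1 : (∑ m ∈ Finset.range (n+3), (m:ℝ) * (c m * w t (n+2-m)))
        = (∑ m ∈ Finset.range (n+2), ((m+1 : ℕ):ℝ) * (c (m+1) * w t (n+2-(m+1))))
          + ((0:ℕ):ℝ) * (c 0 * w t (n+2-0)) := Finset.sum_range_succ' _ (n+2)
    have e2 : (∑ m ∈ Finset.range (n+2), ((m+1 : ℕ):ℝ) * (c (m+1) * w t (n+2-(m+1))))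
        = (∑ m ∈ Finset.range (n+1), ((m+1+1 : ℕ):ℝ) * (c (m+1+1) * w t (n+2-(m+1+1))))
          + ((0+1 : ℕ):ℝ) * (c (0+1) * w t (n+2-(0+1))) := Finset.sum_range_succ' _ (n+1)
    rw [e1, e2]
    simp only [zero_add, Nat.cast_zero, Nat.cast_one, zero_mul, add_zero, c_one, mul_zero, one_mul]
    have : ∀ m ∈ Finset.range (n+1),
        ((m+1+1 : ℕ):ℝ) * (c (m+1+1) * w t (n+2-(m+1+1)))
        = ((m:ℝ)+1) * c m * w t (n-m) := by
      intro m hm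
      have h1 : n+2-(m+1+1) = n - m := by omega
      have h2 : ((m+1+1 : ℕ):ℝ) * c (m+1+1) = ((m:ℝ)+1) * c m := by
        have := c_rec m
        push_cast
        push_cast at this
        linarith [this]
      rw [h1]
      calc ((m+1+1 : ℕ):ℝ) * (c (m+1+1) * w t (n-m))
          = (((m+1+1 : ℕ):ℝ) * c (m+1+1)) * w t (n-m) := by ring
        _ = ((m:ℝ)+1) * c m * w t (n-m) := by rw [h2]
    rw [Finset.sum_congr rfl this]
    unfold P
    rw [← Finset.sum_add_distrib]
    refine Finset.sum_congr rfl fun m hm => ?_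
    ring
  -- Second sum (SK)
  have hSK : (∑ m ∈ Finset.range (n+3), ((n+2-m : ℕ):ℝ) * (c m * w t (n+2-m)))
      = 2*t^2 * P t (n+1) - 2*t * Q t (n+1)
        + ((∑ m ∈ Finset.range (n+1), ((n-m : ℕ):ℝ) * (c m * w t (n-m))) + P t n) := by
    rw [Finset.sum_range_succ]
    simp only [Nat.sub_self, Nat.cast_zero, zero_mul, add_zero]
    have step : ∀ m ∈ Finset.range (n+2),
        ((n+2-m : ℕ):ℝ) * (c m * w t (n+2-m))
        = c m * (2*t^2 * w t (n+1-m) - 2*t*nu t (n+1-m) + ((n+1-m:ℕ):ℝ) * w t (n+1-m-1)) := by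
      intro m hm
      have hmn : m ≤ n+1 := Nat.lt_succ_iff.mp (Finset.mem_range.mp hm)
      have h1 : n+2-m = (n+1-m)+1 := by omega
      rw [h1]
      have h2 : ((n+1-m+1 : ℕ):ℝ) = ((n+1-m : ℕ):ℝ) + 1 := by push_cast; ring
      rw [h2]
      have hw := w_rec t (n+1-m)
      linear_combination (c m) * hw
    rw [Finset.sum_congr rfl step]
    have expand : ∀ m ∈ Finset.range (n+2),
        c m * (2*t^2 * w t (n+1-m) - 2*t*nu t (n+1-m) + ((n+1-m:ℕ):ℝ) * w t (n+1-m-1))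
        = 2*t^2 * (c m * w t (n+1-m)) - 2*t*(c m * nu t (n+1-m))
          + ((n+1-m:ℕ):ℝ) * (c m * w t (n+1-m-1)) := by
      intro m hm; ring
    rw [Finset.sum_congr rfl expand]
    rw [Finset.sum_add_distrib, Finset.sum_sub_distrib, ← Finset.mul_sum, ← Finset.mul_sum]
    have hT : (∑ m ∈ Finset.range (n+2), ((n+1-m:ℕ):ℝ) * (c m * w t (n+1-m-1)))
        = (∑ m ∈ Finset.range (n+1), ((n-m : ℕ):ℝ) * (c m * w t (n-m))) + P t n := by
      rw [Finset.sum_range_succ]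
      simp only [Nat.sub_self, Nat.cast_zero, zero_mul, add_zero]
      have step2 : ∀ m ∈ Finset.range (n+1),
          ((n+1-m:ℕ):ℝ) * (c m * w t (n+1-m-1))
          = ((n-m : ℕ):ℝ) * (c m * w t (n-m)) + c m * w t (n-m) := by
        intro m hm
        have hmn : m ≤ n := Nat.lt_succ_iff.mp (Finset.mem_range.mp hm)
        have h1 : n+1-m-1 = n - m := by omega
        have h2 : ((n+1-m : ℕ):ℝ) = ((n-m : ℕ):ℝ) + 1 := by
          have : n+1-m = (n-m)+1 := by omega
          rw [this]; push_cast; ring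
        rw [h1, h2]; ring
      rw [Finset.sum_congr rfl step2, Finset.sum_add_distrib]
      unfold P; rfl
    rw [hT]
    unfold P Q
    ring
  rw [hsplit, hSA, hSK]
  have hfinal : (∑ m ∈ Finset.range (n+1), (m:ℝ) * (c m * w t (n-m)))
      + (∑ m ∈ Finset.range (n+1), ((n-m : ℕ):ℝ) * (c m * w t (n-m)))
      = (n:ℝ) * P t n := by
    rw [P, Finset.mul_sum, ← Finset.sum_add_distrib]
    refine Finset.sum_congr rfl fun m hm => ?_
    have hmn : m ≤ n := Nat.lt_succ_iff.mp (Finset.mem_range.mp hm)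
    have : ((n-m : ℕ):ℝ) = (n:ℝ) - (m:ℝ) := by rw [Nat.cast_sub hmn]
    rw [this]; ring
  linarith [hfinal]


lemma Sfun_succ (n : ℕ) (x : ℝ) :
    Sfun (n+1) x = Sfun n x + (-1:ℝ)^(n+1) * laguerreFun (n+1) x := by
  unfold Sfun; exact Finset.sum_range_succ _ _

lemma S1_succ (n : ℕ) (x : ℝ) :
    S1 (n+1) x = S1 n x + (-1:ℝ)^(n+1) * L1 (n+1) x := by
  unfold S1; exact Finset.sum_range_succ _ _

lemma lag_zero (x : ℝ) : laguerreFun 0 x = 1 := by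
  simp [laguerreFun]

lemma L1_zero (x : ℝ) : L1 0 x = 1 := by
  simp [L1]

/-- (M1): `L_{k+1} = L^{(1)}_{k+1} - L^{(1)}_k`. -/
lemma lag_L1 (k : ℕ) (x : ℝ) : laguerreFun (k+1) x + L1 k x = L1 (k+1) x := by
  have hA : laguerreFun (k+1) x
      = (∑ j ∈ Finset.range (k+1), ((k+1).choose j : ℝ) * (-x)^j / (j.factorial : ℝ))
        + ((k+1).choose (k+1) : ℝ) * (-x)^(k+1) / ((k+1).factorial : ℝ) := by
    unfold laguerreFun; exact Finset.sum_range_succ _ _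
  have hB : L1 (k+1) x
      = (∑ j ∈ Finset.range (k+1), ((k+2).choose (k+1-j) : ℝ) * (-x)^j / (j.factorial : ℝ))
        + ((k+2).choose (k+1-(k+1)) : ℝ) * (-x)^(k+1) / ((k+1).factorial : ℝ) := by
    unfold L1; exact Finset.sum_range_succ _ _
  rw [hA, hB]
  simp only [Nat.choose_self, Nat.sub_self, Nat.choose_zero_right, Nat.cast_one, one_mul]
  have hmain : (∑ j ∈ Finset.range (k+1), ((k+1).choose j : ℝ) * (-x)^j / (j.factorial : ℝ))
      + L1 k x
      = ∑ j ∈ Finset.range (k+1), ((k+2).choose (k+1-j) : ℝ) * (-x)^j / (j.factorial : ℝ) := by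
    unfold L1
    rw [← Finset.sum_add_distrib]
    refine Finset.sum_congr rfl fun j hj => ?_
    have hjk : j ≤ k := Nat.lt_succ_iff.mp (Finset.mem_range.mp hj)
    have key : (k+1).choose j + (k+1).choose (k-j) = (k+2).choose (k+1-j) := by
      have h1 : k+1-j = (k-j)+1 := by omega
      rw [h1, Nat.choose_succ_succ]
      have h2 : (k+1).choose ((k-j)+1) = (k+1).choose j := by
        have h3 : (k-j)+1 = (k+1) - j := by omega
        rw [h3]
        exact Nat.choose_symm (by omega)
      rw [h2]; omega
    have keyR : ((k+1).choose j : ℝ) + ((k+1).choose (k-j) : ℝ) = ((k+2).choose (k+1-j) : ℝ) := by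
      exact_mod_cast congrArg (fun z : ℕ => (z:ℝ)) key
    rw [← add_div, ← add_mul, keyR]
  linarith [hmain]

/-- telescoped (M1). -/
lemma Sfun_eq_S1 (n : ℕ) (x : ℝ) : Sfun (n+1) x = S1 (n+1) x + S1 n x := by
  induction n with
  | zero =>
    have h0 : Sfun 0 x = 1 := by
      unfold Sfun; simp [lag_zero]
    have h1 : S1 0 x = 1 := by
      unfold S1; simp [L1_zero]
    have e1 := Sfun_succ 0 x
    have e2 := S1_succ 0 x
    have e3 := lag_L1 0 x
    rw [h0] at e1
    rw [L1_zero] at e3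
    rw [h1] at e2
    rw [e1, e2, h1]
    simp only [zero_add, pow_one]
    linarith [e3]
  | succ n ih =>
    have e1 := Sfun_succ (n+1) x
    have e2 := S1_succ (n+1) x
    have e3 := S1_succ n x
    have e4 := lag_L1 (n+1) x
    have hp : (-1:ℝ)^(n+1+1) = -(-1:ℝ)^(n+1) := by rw [pow_succ]; ring
    rw [hp] at e1 e2
    rw [e1, ih, e2, e3]
    linarith [mul_comm ((-1:ℝ)^(n+1)) (laguerreFun (n+2) x),
      congrArg (fun z => (-1:ℝ)^(n+1) * z) e4]

/-- (M3): `(n+2)(L_{n+1} - L_{n+2}) = x L^{(1)}_{n+1}`. -/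
lemma lag_diff (n : ℕ) (x : ℝ) :
    ((n:ℝ)+2) * (laguerreFun (n+1) x - laguerreFun (n+2) x) = x * L1 (n+1) x := by
  have ext : laguerreFun (n+1) x
      = ∑ j ∈ Finset.range (n+3), ((n+1).choose j : ℝ) * (-x)^j / (j.factorial : ℝ) := by
    have hz : ((n+1).choose (n+2) : ℝ) = 0 := by
      norm_cast
      exact Nat.choose_eq_zero_of_lt (by omega)
    symm
    rw [Finset.sum_range_succ, hz, zero_mul, zero_div, add_zero]
    rfl
  have hsub : laguerreFun (n+2) x - laguerreFun (n+1) x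
      = ∑ j ∈ Finset.range (n+3),
          (((n+2).choose j : ℝ) - ((n+1).choose j : ℝ)) * (-x)^j / (j.factorial : ℝ) := by
    rw [ext]
    unfold laguerreFun
    rw [← Finset.sum_sub_distrib]
    exact Finset.sum_congr rfl fun j hj => by ring
  have hpeel : (∑ j ∈ Finset.range (n+3),
        (((n+2).choose j : ℝ) - ((n+1).choose j : ℝ)) * (-x)^j / (j.factorial : ℝ))
      = (∑ j ∈ Finset.range (n+2),
          (((n+2).choose (j+1) : ℝ) - ((n+1).choose (j+1) : ℝ)) * (-x)^(j+1) / ((j+1).factorial : ℝ))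
        + (((n+2).choose 0 : ℝ) - ((n+1).choose 0 : ℝ)) * (-x)^0 / ((0).factorial : ℝ) :=
    Finset.sum_range_succ' _ (n+2)
  have hzero : (((n+2).choose 0 : ℝ) - ((n+1).choose 0 : ℝ)) * (-x)^0 / ((0).factorial : ℝ) = 0 := by
    simp
  have hpas : ∀ j ∈ Finset.range (n+2),
      (((n+2).choose (j+1) : ℝ) - ((n+1).choose (j+1) : ℝ)) * (-x)^(j+1) / ((j+1).factorial : ℝ)
      = ((n+1).choose j : ℝ) * (-x)^(j+1) / ((j+1).factorial : ℝ) := by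
    intro j hj
    have hp : (n+2).choose (j+1) = (n+1).choose j + (n+1).choose (j+1) := Nat.choose_succ_succ _ _
    have hpR : ((n+2).choose (j+1) : ℝ) - ((n+1).choose (j+1) : ℝ) = ((n+1).choose j : ℝ) := by
      have : ((n+2).choose (j+1) : ℝ) = ((n+1).choose j : ℝ) + ((n+1).choose (j+1) : ℝ) := by
        exact_mod_cast congrArg (fun z : ℕ => (z:ℝ)) hp
      linarith
    rw [hpR]
  have hdiff : laguerreFun (n+2) x - laguerreFun (n+1) x
      = ∑ j ∈ Finset.range (n+2), ((n+1).choose j : ℝ) * (-x)^(j+1) / ((j+1).factorial : ℝ) := by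
    rw [hsub, hpeel, hzero, add_zero, Finset.sum_congr rfl hpas]
  have hgoal : x * L1 (n+1) x
      = ∑ j ∈ Finset.range (n+2),
          -(((n:ℝ)+2) * (((n+1).choose j : ℝ) * (-x)^(j+1) / ((j+1).factorial : ℝ))) := by
    unfold L1
    rw [Finset.mul_sum]
    refine Finset.sum_congr rfl fun j hj => ?_
    have hjn : j ≤ n+1 := Nat.lt_succ_iff.mp (Finset.mem_range.mp hj)
    have key1 : (n+2).choose (n+1-j) = (n+2).choose (j+1) := by
      have h3 : n+1-j = (n+2) - (j+1) := by omega
      rw [h3]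
      exact Nat.choose_symm (by omega)
    have key2 : (n+2) * ((n+1).choose j) = ((n+2).choose (j+1)) * (j+1) :=
      Nat.add_one_mul_choose_eq (n+1) j
    have key1R : (((n+2).choose (n+1-j) : ℕ) : ℝ) = (((n+2).choose (j+1) : ℕ) : ℝ) := by
      exact_mod_cast congrArg (fun z : ℕ => (z:ℝ)) key1
    have key2R : ((n:ℝ)+2) * (((n+1).choose j : ℕ) : ℝ)
        = (((n+2).choose (j+1) : ℕ) : ℝ) * ((j:ℝ)+1) := by
      have := congrArg (fun z : ℕ => (z:ℝ)) key2
      push_cast at this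
      linarith
    have hfact : (((j+1).factorial : ℕ) : ℝ) = ((j:ℝ)+1) * ((j.factorial : ℕ) : ℝ) := by
      rw [Nat.factorial_succ]; push_cast; ring
    have hne1 : ((j.factorial : ℕ) : ℝ) ≠ 0 := Nat.cast_ne_zero.mpr (Nat.factorial_ne_zero j)
    have hne2 : ((j:ℝ)+1) ≠ 0 := by positivity
    rw [key1R, hfact, pow_succ]
    field_simp
    linear_combination (-(x * x^j * (-1:ℝ)^j)) * key2R
  have hL1 : ((n:ℝ)+2) * (laguerreFun (n+1) x - laguerreFun (n+2) x)
      = -(((n:ℝ)+2) * (laguerreFun (n+2) x - laguerreFun (n+1) x)) := by ring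
  rw [hL1, hdiff, hgoal, Finset.mul_sum, ← Finset.sum_neg_distrib]

/-- (M2). -/
lemma S_rec (n : ℕ) (x : ℝ) :
    ((n:ℝ)+2) * Sfun (n+2) x
      = ((n:ℝ)+2) * Sfun n x + x * Sfun (n+1) x - 2*x*S1 n x := by
  have e1 : Sfun (n+2) x = Sfun (n+1) x + (-1:ℝ)^(n+2) * laguerreFun (n+2) x := Sfun_succ (n+1) x
  have e2 := Sfun_succ n x
  have e3 := Sfun_eq_S1 n x
  have e4 := S1_succ n x
  have e5 := lag_diff n x
  have hp2 : (-1:ℝ)^(n+2) = (-1:ℝ)^n := by rw [pow_succ, pow_succ]; ring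
  have hp1 : (-1:ℝ)^(n+1) = -(-1:ℝ)^n := by rw [pow_succ]; ring
  rw [hp2] at e1
  rw [hp1] at e2 e4
  linear_combination (((n:ℝ)+2))*e1 + (((n:ℝ)+2))*e2 - ((-1:ℝ)^n)*e5 - x*e3 - x*e4

/-- The main identity: `P t n = S_n(2t²)` and `Q t n = q' t n`. -/
lemma main (t : ℝ) (n : ℕ) : P t n = Sfun n (2*t^2) ∧ Q t n = q' t n := by
  induction n using Nat.twoStepInduction with
  | zero =>
    constructor
    · have h1 : P t 0 = 1 := by
        simp [P, c, w, H]
      have h2 : Sfun 0 (2*t^2) = 1 := by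
        unfold Sfun; simp [lag_zero]
      rw [h1, h2]
    · simp [Q, nu, q']
  | one =>
    constructor
    · have h1 : P t 1 = 2*t^2 := by
        simp [P, Finset.sum_range_succ, c, w, H, c_one]
        ring
      have h2 : Sfun 1 (2*t^2) = 2*t^2 := by
        have := Sfun_succ 0 (2*t^2)
        have h0 : Sfun 0 (2*t^2) = 1 := by unfold Sfun; simp [lag_zero]
        have hl : laguerreFun 1 (2*t^2) = 1 - 2*t^2 := by
          unfold laguerreFun
          simp [Finset.sum_range_succ]
          ring
        rw [this, h0, hl]; ring
      rw [h1, h2]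
    · have h1 : Q t 1 = 2*t := by
        simp [Q, Finset.sum_range_succ, c, nu, H, c_one]
      have h2 : q' t 1 = 2*t := by
        show 2*t*S1 0 (2*t^2) = 2*t
        have : S1 0 (2*t^2) = 1 := by unfold S1; simp [L1_zero]
        rw [this, mul_one]
      rw [h1, h2]
  | more n ih1 ih2 =>
    obtain ⟨hP1, hQ1⟩ := ih1
    obtain ⟨hP2, hQ2⟩ := ih2
    have hq1 : q' t (n+1) = 2*t*S1 n (2*t^2) := rfl
    have hq2 : q' t (n+2) = 2*t*S1 (n+1) (2*t^2) := rfl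
    have hQnew : Q t (n+2) = q' t (n+2) := by
      rw [Q_rec t (n+1), hP2, hQ2, hq2, hq1, Sfun_eq_S1 n (2*t^2)]
      ring
    refine ⟨?_, hQnew⟩
    have h := P_rec t n
    rw [hP1, hP2, hQ2, hq1] at h
    have h2 := S_rec n (2*t^2)
    have hcombined : ((n:ℝ)+2) * P t (n+2) = ((n:ℝ)+2) * Sfun (n+2) (2*t^2) := by
      rw [h, h2]; ring
    have hne : ((n:ℝ)+2) ≠ 0 := by positivity
    exact mul_left_cancel₀ hne hcombined


end AltLag

theorem S_nonneg (n : ℕ) (X : ℝ) (hX : 0 ≤ X) : 0 ≤ Sfun n X := by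
  set t := Real.sqrt (X/2) with ht
  have h2 : 2*t^2 = X := by
    rw [ht, Real.sq_sqrt (by linarith : (0:ℝ) ≤ X/2)]
    ring
  have hmain := (AltLag.main t n).1
  rw [h2] at hmain
  rw [← hmain]
  exact AltLag.P_nonneg t n
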